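/- Let α ≥ 1/2 and R₀(z_a, z_b) = (2 - (z_a+z_b)(z_a/(1-αz_a) + z_b/(1-αz_b))) / (2(1 - (z_a+z_b))). For fixed z_b < 0, the map z_a ↦ R₀(z_a, z_b) is strictly increasing on (-∞, 0). -/

import Mathlib

theorem stmt_12 (α : ℝ) (hα : 1 / 2 ≤ α) (zb : ℝ) (hzb : zb < 0) :
    StrictMonoOn (fun za : ℝ =>
      (2 - (za + zb) * (za / (1 - α * za) + zb / (1 - α * zb))) /
        (2 * (1 - (za + zb)))) (Set.Iio 0) := by
  intro x hx y hy hxy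
  simp only [Set.mem_Iio] at hx hy
  have hA : (0:ℝ) < α := lt_of_lt_of_le (by norm_num) hα
  have hAx : 0 < 1 - α * x := by nlinarith
  have hAy : 0 < 1 - α * y := by nlinarith
  have hC : 0 < 1 - α * zb := by nlinarith
  have hDx : 0 < 2 * (1 - (x + zb)) := by nlinarith
  have hDy : 0 < 2 * (1 - (y + zb)) := by nlinarith
  have hX : 0 < -x := by linarith
  have hY : 0 < -y := by linarith
  have hB : 0 < -zb := by linarith
  have hQ : 0 < 2 - y - x + x*y - 2*zb + zb*y + zb*x + zb^2 - 2*α*y - 2*α*x + α*x*y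
      - 2*α*zb + 2*α*zb*y + 2*α*zb*x - α*zb*x*y + α*zb^2 - α*zb^2*y - α*zb^2*x - α*zb^3
      + 2*α^2*x*y + 2*α^2*zb*y + 2*α^2*zb*x - 2*α^2*zb*x*y - 2*α^3*zb*x*y := by
    nlinarith [mul_pos hA hY, mul_pos hA hX, mul_pos hA hB,
      mul_pos hB hY, mul_pos hB hX, mul_pos hX hY,
      mul_pos (mul_pos hA hB) hY, mul_pos (mul_pos hA hB) hX, mul_pos (mul_pos hA hX) hY,
      mul_pos hB hB,
      mul_pos (mul_pos hA hB) hB,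
      mul_pos (mul_pos (mul_pos hA hB) hB) hY,
      mul_pos (mul_pos (mul_pos hA hB) hB) hX,
      mul_pos (mul_pos (mul_pos hA hB) hB) hB,
      mul_pos (mul_pos hB hX) hY,
      mul_pos (mul_pos (mul_pos hA hB) hX) hY,
      mul_pos (mul_pos (mul_pos hA hA) hX) hY,
      mul_pos (mul_pos (mul_pos hA hA) hB) hY,
      mul_pos (mul_pos (mul_pos hA hA) hB) hX,
      mul_pos (mul_pos (mul_pos (mul_pos hA hA) hB) hX) hY,
      mul_pos (mul_pos (mul_pos (mul_pos (mul_pos hA hA) hA) hB) hX) hY]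
  simp only
  rw [← sub_pos]
  have hrw : (2 - (y + zb) * (y / (1 - α * y) + zb / (1 - α * zb))) /
        (2 * (1 - (y + zb))) -
      (2 - (x + zb) * (x / (1 - α * x) + zb / (1 - α * zb))) /
        (2 * (1 - (x + zb))) =
      ((y - x) * (2 - y - x + x*y - 2*zb + zb*y + zb*x + zb^2 - 2*α*y - 2*α*x + α*x*y
      - 2*α*zb + 2*α*zb*y + 2*α*zb*x - α*zb*x*y + α*zb^2 - α*zb^2*y - α*zb^2*x - α*zb^3
      + 2*α^2*x*y + 2*α^2*zb*y + 2*α^2*zb*x - 2*α^2*zb*x*y - 2*α^3*zb*x*y)) /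
      ((2 * (1 - (x + zb))) * (2 * (1 - (y + zb))) * ((1 - α * x) * (1 - α * y) * (1 - α * zb)) / 2) := by
    have h1 : 1 - (x + zb) ≠ 0 := by linarith
    have h2 : 1 - (y + zb) ≠ 0 := by linarith
    have h3 : 1 - x * α ≠ 0 := by nlinarith
    have h4 : 1 - y * α ≠ 0 := by nlinarith
    have h5 : 1 - zb * α ≠ 0 := by nlinarith
    have h6 : 1 - zb - x ≠ 0 := by linarith
    have h7 : 1 - y - zb ≠ 0 := by linarith
    rw [div_sub_div _ _ hDy.ne' hDx.ne', div_eq_div_iff (by positivity) (by positivity)]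
    field_simp
    ring
  rw [hrw]
  apply div_pos (mul_pos (by linarith) hQ)
  positivity
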